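/- With ρ : G → F_λ and ρ_k : G_k → F_λ defined as in the chain construction (ρ_1 = [ρ, η^F], ρ_{k+1} = [μ^F ∘ ρ F_λ ∘ G ρ_k, η^F], colimits at limit steps), the transformation ρ_λ : G_λ → F_λ is a morphism of G-algebras componentwise: for every object A, ρ_{λ,A} : (G_λ A, υ^G_A) → (F_λ A, β_A) is a G-algebra morphism, where β = μ^F ∘ ρ F_λ. -/

import Mathlib

open CategoryTheory CategoryTheory.Limits

universe v u

/-- The free-algebra (term functor) construction for an endofunctor `F` on a cocomplete
category: term functors `Fo n` for each ordinal `n`, connecting natural transformations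
`w`, coproduct injections `q n : F ∘ Fₙ ⟶ F_{n+1}` and `ι n : Id ⟶ Fₙ`, where
`F₀ = Id` (up to iso, witnessed by `ι 0` being invertible), `F_{n+1} = F Fₙ + Id`
(witnessed by the binary-coproduct universal property), and `Fₗ = colim_{m<l} F_m` at
limit ordinals (witnessed by the hand-rolled colimit universal property). -/
structure TermConstruction {C : Type u} [Category.{v} C] (F : C ⥤ C) where
  Fo : Ordinal.{v} → C ⥤ C
  w : ∀ {m n : Ordinal.{v}}, m ≤ n → (Fo m ⟶ Fo n)
  q : ∀ n : Ordinal.{v}, Fo n ⋙ F ⟶ Fo (n + 1)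
  ι : ∀ n : Ordinal.{v}, 𝟭 C ⟶ Fo n
  iso0 : IsIso (ι 0)
  w_refl : ∀ n : Ordinal.{v}, w (le_refl n) = 𝟙 (Fo n)
  w_trans : ∀ {m n p : Ordinal.{v}} (h₁ : m ≤ n) (h₂ : n ≤ p), w h₁ ≫ w h₂ = w (h₁.trans h₂)
  ι_w : ∀ {m n : Ordinal.{v}} (h : m ≤ n), ι m ≫ w h = ι n
  q_w : ∀ {m n : Ordinal.{v}} (h : m ≤ n),
      Functor.whiskerRight (w h) F ≫ q n = q m ≫ w (add_le_add_left h 1)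
  succ_isColimit : ∀ (n : Ordinal.{v}) (A : C),
      Nonempty (IsColimit (BinaryCofan.mk ((q n).app A) ((ι (n + 1)).app A)))
  limit_exists_unique : ∀ (n : Ordinal.{v}), Order.IsSuccLimit n → ∀ (A X : C)
      (g : ∀ m : Ordinal.{v}, m < n → ((Fo m).obj A ⟶ X)),
      (∀ (m m' : Ordinal.{v}) (h : m ≤ m') (h' : m' < n),
        (w h).app A ≫ g m' h' = g m (lt_of_le_of_lt h h')) →
      ∃! k : (Fo n).obj A ⟶ X,
        ∀ (m : Ordinal.{v}) (h : m < n), (w h.le).app A ≫ k = g m h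

/-- The term-evaluations `ε n : Fₙ A ⟶ A` of an `F`-algebra `(A, α)`, defined recursively by
`ε 0 = id` (transported along `ι 0`), `ε (n+1) = [α ∘ F (ε n), id]` and colimits at limit
ordinals. -/
structure TermEval {C : Type u} [Category.{v} C] (F : C ⥤ C) (T : TermConstruction F)
    (A : C) (α : F.obj A ⟶ A) where
  ε : ∀ n : Ordinal.{v}, (T.Fo n).obj A ⟶ A
  ε_zero : (T.ι 0).app A ≫ ε 0 = 𝟙 A
  ε_succ_q : ∀ n : Ordinal.{v}, (T.q n).app A ≫ ε (n + 1) = F.map (ε n) ≫ α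
  ε_succ_ι : ∀ n : Ordinal.{v}, (T.ι (n + 1)).app A ≫ ε (n + 1) = 𝟙 A
  ε_limit : ∀ (n : Ordinal.{v}), Order.IsSuccLimit n →
      ∀ (m : Ordinal.{v}) (h : m < n), (T.w h.le).app A ≫ ε n = ε m

/-- The chain construction extending a natural transformation `ρ : G ⟶ F_λ` to
transformations `ρ_k : G_k ⟶ F_λ` on the term functors of `G`:  `ρ₁ = [ρ, η]`,
`ρ_{k+1} = [μ ∘ ρ F_λ ∘ G ρ_k, η]` (where `η = ι_λ` is the unit and `μ` the multiplication of
the free monad on `F`), with colimits at limit ordinals. -/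
structure ChainExtension {C : Type u} [Category.{v} C] (F G : C ⥤ C)
    (TF : TermConstruction F) (TG : TermConstruction G) (l : Ordinal.{v})
    (μ : TF.Fo l ⋙ TF.Fo l ⟶ TF.Fo l) (ρ : G ⟶ TF.Fo l) where
  ρo : ∀ k : Ordinal.{v}, TG.Fo k ⟶ TF.Fo l
  ρo_ι : ∀ k : Ordinal.{v}, TG.ι k ≫ ρo k = TF.ι l
  ρo_one : ∀ A : C,
      G.map ((TG.ι 0).app A) ≫ (TG.q 0).app A ≫ (ρo (0 + 1)).app A = ρ.app A
  ρo_succ : ∀ (k : Ordinal.{v}) (A : C),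
      (TG.q k).app A ≫ (ρo (k + 1)).app A =
        G.map ((ρo k).app A) ≫ ρ.app ((TF.Fo l).obj A) ≫ μ.app A
  ρo_limit : ∀ (k : Ordinal.{v}), Order.IsSuccLimit k → ∀ (j : Ordinal.{v}) (h : j < k),
      TG.w h.le ≫ ρo k = ρo j



section Aux

variable {C : Type u} [Category.{v} C] {G : C ⥤ C} (TG : TermConstruction G)
  (l : Ordinal.{v}) (A : C)

/-- The chain diagram `m ↦ Gₘ A` over `{m // m < l}`. -/
def chainDiagram : {m : Ordinal.{v} // m < l} ⥤ C where
  obj m := (TG.Fo m.1).obj A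
  map {m m'} f := (TG.w (leOfHom f)).app A
  map_id m := congrArg (fun t => t.app A) (TG.w_refl m.1)
  map_comp {m m' m''} f g :=
    congrArg (fun t => t.app A) (TG.w_trans (leOfHom f) (leOfHom g)).symm

/-- The cocone over the chain diagram with apex `G_l A`. -/
def chainCocone : Cocone (chainDiagram TG l A) where
  pt := (TG.Fo l).obj A
  ι :=
    { app := fun m => (TG.w m.2.le).app A
      naturality := fun m m' f => by
        have h := TG.w_trans (leOfHom f) m'.2.le
        have : TG.w (leOfHom f) ≫ TG.w m'.2.le = TG.w m.2.le := by
          rw [h]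
        dsimp [chainDiagram]
        rw [← NatTrans.comp_app, this, Category.comp_id] }

/-- The cocone `chainCocone` is a colimit, by the hand-rolled universal property. -/
noncomputable def chainIsColimit (hl : Order.IsSuccLimit l) : IsColimit (chainCocone TG l A) := by
  have EU : ∀ s : Cocone (chainDiagram TG l A),
      ∃! k : (TG.Fo l).obj A ⟶ s.pt,
        ∀ (m : Ordinal.{v}) (h : m < l), (TG.w h.le).app A ≫ k = s.ι.app ⟨m, h⟩ := by
    intro s
    refine TG.limit_exists_unique l hl A s.pt (fun m h => s.ι.app ⟨m, h⟩) ?_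
    intro m m' h h'
    have := s.ι.naturality (homOfLE h : (⟨m, lt_of_le_of_lt h h'⟩ :
      {m : Ordinal.{v} // m < l}) ⟶ ⟨m', h'⟩)
    dsimp [chainDiagram] at this
    rw [Category.comp_id] at this
    exact this.symm ▸ rfl
  exact
    { desc := fun s => (EU s).choose
      fac := fun s m => (EU s).choose_spec.1 m.1 m.2
      uniq := fun s k hk => (EU s).choose_spec.2 k (fun m h => hk ⟨m, h⟩) }

end Aux

/-- The transformation `ρ_λ : G_λ ⟶ F_λ` obtained by the chain construction is componentwise a
morphism of `G`-algebras: for every object `A`,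
`ρ_{λ,A} : (G_λ A, υ^G_A) ⟶ (F_λ A, β_A)` is a `G`-algebra morphism, where `β = μ ∘ ρ F_λ`. -/
theorem chainExtension_is_algebra_morphism {C : Type u} [Category.{v} C] [HasColimits C]
    (F G : C ⥤ C) (TF : TermConstruction F) (TG : TermConstruction G)
    (l : Ordinal.{v}) (hl : Order.IsSuccLimit l)
    [PreservesColimitsOfShape {m : Ordinal.{v} // m < l} F]
    [PreservesColimitsOfShape {m : Ordinal.{v} // m < l} G]
    (μ : TF.Fo l ⋙ TF.Fo l ⟶ TF.Fo l) (ρ : G ⟶ TF.Fo l)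
    (R : ChainExtension F G TF TG l μ ρ)
    (υG : TG.Fo l ⋙ G ⟶ TG.Fo l)
    (hυG : ∀ (n : Ordinal.{v}) (hn : n < l) (hn1 : n + 1 ≤ l) (A : C),
      G.map ((TG.w hn.le).app A) ≫ υG.app A = (TG.q n).app A ≫ (TG.w hn1).app A)
    (A : C) :
    υG.app A ≫ (R.ρo l).app A =
      G.map ((R.ρo l).app A) ≫ ρ.app ((TF.Fo l).obj A) ≫ μ.app A := by
  have hG : IsColimit (G.mapCocone (chainCocone TG l A)) :=
    isColimitOfPreserves G (chainIsColimit TG l A hl)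
  apply hG.hom_ext
  rintro ⟨n, hn⟩
  dsimp [chainCocone]
  have hn1 : n + 1 < l := by
    have := hl.succ_lt hn
    rwa [← Ordinal.add_one_eq_succ] at this
  -- componentwise consequences of ρo_limit
  have hρn : (TG.w hn.le).app A ≫ (R.ρo l).app A = (R.ρo n).app A := by
    have := R.ρo_limit l hl n hn
    rw [← NatTrans.comp_app, this]
  have hρn1 : (TG.w hn1.le).app A ≫ (R.ρo l).app A = (R.ρo (n + 1)).app A := by
    have := R.ρo_limit l hl (n + 1) hn1
    rw [← NatTrans.comp_app, this]
  calc G.map ((TG.w hn.le).app A) ≫ υG.app A ≫ (R.ρo l).app A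
      = ((TG.q n).app A ≫ (TG.w hn1.le).app A) ≫ (R.ρo l).app A := by
        rw [← Category.assoc, hυG n hn hn1.le A]
    _ = (TG.q n).app A ≫ (R.ρo (n + 1)).app A := by
        rw [Category.assoc, hρn1]
    _ = G.map ((R.ρo n).app A) ≫ ρ.app ((TF.Fo l).obj A) ≫ μ.app A := R.ρo_succ n A
    _ = G.map ((TG.w hn.le).app A) ≫ G.map ((R.ρo l).app A) ≫
          ρ.app ((TF.Fo l).obj A) ≫ μ.app A := by
        simp only [← Category.assoc]
        rw [← G.map_comp, hρn]
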